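/- Let n ≥ 1. For all x, y ∈ ℝⁿ with x ≠ 0, |y| ln(1+|y|) ≥ |x| ln(1+|x|) + ( ln(1+|x|) + |x|/(1+|x|) ) (x/|x|)·(y−x) + |y−x|² / ( 2(1+|x|+|y|) ). -/

import Mathlib

open RealInnerProductSpace

private lemma logA (u : ℝ) (hu : 0 ≤ u) : 2*u/(2+u) ≤ Real.log (1+u) := by
  set f : ℝ → ℝ := fun w => Real.log (1+w) - 2*w/(2+w) with hf
  have hder : ∀ v : ℝ, 0 ≤ v → HasDerivAt f (1/(1+v) - 4/(2+v)^2) v := by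
    intro v hv
    have h1 : (0:ℝ) < 1 + v := by linarith
    have h2 : (0:ℝ) < 2 + v := by linarith
    have d1 : HasDerivAt (fun w : ℝ => Real.log (1+w)) (1/(1+v)) v := by
      simpa using ((hasDerivAt_id v).const_add 1).log h1.ne'
    have d2 : HasDerivAt (fun w : ℝ => 2*w/(2+w)) (4/(2+v)^2) v := by
      have := ((hasDerivAt_id v).const_mul 2).div ((hasDerivAt_id v).const_add 2) h2.ne'
      refine this.congr_deriv ?_
      simp only [id_eq]
      field_simp
      ring
    exact d1.sub d2
  have hmono : MonotoneOn f (Set.Ici 0) := by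
    apply monotoneOn_of_deriv_nonneg (convex_Ici 0)
    · intro v hv
      exact (hder v hv).continuousAt.continuousWithinAt
    · intro v hv
      rw [interior_Ici] at hv
      exact (hder v (le_of_lt hv)).differentiableAt.differentiableWithinAt
    · intro v hv
      rw [interior_Ici] at hv
      have hv' : (0:ℝ) < v := hv
      rw [(hder v hv'.le).deriv]
      have h1 : (0:ℝ) < 1 + v := by linarith
      have h2 : (0:ℝ) < 2 + v := by linarith
      rw [sub_nonneg, div_le_div_iff₀ (by positivity) h1]
      nlinarith [sq_nonneg v]
  have h0 : f 0 = 0 := by simp [hf]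
  have := hmono Set.self_mem_Ici hu hu
  rw [h0] at this
  simpa [hf, sub_nonneg] using this

private lemma logB (u : ℝ) (hu : 0 ≤ u) : Real.log (1+u) ≤ u*(2+u)/(2*(1+u)) := by
  set f : ℝ → ℝ := fun w => w*(2+w)/(2*(1+w)) - Real.log (1+w) with hf
  have hder : ∀ v : ℝ, 0 ≤ v → HasDerivAt f ((2+2*v+v^2)/(2*(1+v)^2) - 1/(1+v)) v := by
    intro v hv
    have h1 : (0:ℝ) < 1 + v := by linarith
    have d1 : HasDerivAt (fun w : ℝ => w*(2+w)/(2*(1+w))) ((2+2*v+v^2)/(2*(1+v)^2)) v := by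
      have da : HasDerivAt (fun w : ℝ => w*(2+w)) (2+2*v) v := by
        have := (hasDerivAt_id v).mul ((hasDerivAt_id v).const_add 2)
        refine this.congr_deriv ?_
        simp only [id_eq, one_mul, mul_one]
        ring
      have db : HasDerivAt (fun w : ℝ => 2*(1+w)) 2 v := by
        simpa using ((hasDerivAt_id v).const_add 1).const_mul 2
      have := da.div db (by positivity)
      refine this.congr_deriv ?_
      field_simp
      ring
    have d2 : HasDerivAt (fun w : ℝ => Real.log (1+w)) (1/(1+v)) v := by
      simpa using ((hasDerivAt_id v).const_add 1).log h1.ne'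
    exact d1.sub d2
  have hmono : MonotoneOn f (Set.Ici 0) := by
    apply monotoneOn_of_deriv_nonneg (convex_Ici 0)
    · intro v hv
      exact (hder v hv).continuousAt.continuousWithinAt
    · intro v hv
      rw [interior_Ici] at hv
      exact (hder v (le_of_lt hv)).differentiableAt.differentiableWithinAt
    · intro v hv
      rw [interior_Ici] at hv
      have hv' : (0:ℝ) < v := hv
      rw [(hder v hv'.le).deriv]
      have h1 : (0:ℝ) < 1 + v := by linarith
      rw [sub_nonneg, div_le_div_iff₀ h1 (by positivity)]
      nlinarith [sq_nonneg v]
  have h0 : f 0 = 0 := by simp [hf]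
  have := hmono Set.self_mem_Ici hu hu
  rw [h0] at this
  simpa [hf, sub_nonneg] using this

private lemma oneD (a b : ℝ) (ha : 0 < a) (hb : 0 ≤ b) :
    a * Real.log (1+a) + (Real.log (1+a) + a/(1+a)) * (b - a) + (b-a)^2/(2*(1+a+b))
      ≤ b * Real.log (1+b) := by
  have h1a : (0:ℝ) < 1 + a := by linarith
  have h1b : (0:ℝ) < 1 + b := by linarith
  have hab : (0:ℝ) < 1 + a + b := by linarith
  have h2ab : (0:ℝ) < 2 + a + b := by linarith
  rcases le_total a b with hle | hle
  · -- a ≤ b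
    have hu : 0 ≤ (b-a)/(1+a) := div_nonneg (by linarith) h1a.le
    have hlog := logA _ hu
    have heq : 1 + (b-a)/(1+a) = (1+b)/(1+a) := by field_simp; ring
    rw [heq, Real.log_div h1b.ne' h1a.ne'] at hlog
    have h2 : 2*((b-a)/(1+a)) / (2 + (b-a)/(1+a)) = 2*(b-a)/(2+a+b) := by
      rw [div_eq_div_iff (ne_of_gt (by positivity)) h2ab.ne']
      field_simp
      ring_nf
    rw [h2] at hlog
    have hkey : b * (2*(b-a)/(2+a+b)) ≤ b * Real.log (1+b) - b * Real.log (1+a) := by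
      have h := mul_le_mul_of_nonneg_left hlog hb
      linarith [mul_sub b (Real.log (1+b)) (Real.log (1+a)), h]
    -- rational part
    have hfrac : a*(b-a)/(1+a) + (b-a)^2/(2*(1+a+b)) ≤ b * (2*(b-a)/(2+a+b)) := by
      rw [div_add_div _ _ h1a.ne' (by positivity), mul_div_assoc' ,
        div_le_div_iff₀ (by positivity) h2ab]
      nlinarith [sq_nonneg (b-a), mul_nonneg (mul_nonneg (sub_nonneg.2 hle) (sub_nonneg.2 hle)) ha.le,
        mul_nonneg (mul_nonneg (sub_nonneg.2 hle) (sub_nonneg.2 hle)) hb,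
        mul_nonneg (mul_nonneg (mul_nonneg (sub_nonneg.2 hle) (sub_nonneg.2 hle)) ha.le) hb,
        mul_nonneg (mul_nonneg (mul_nonneg (sub_nonneg.2 hle) (sub_nonneg.2 hle)) ha.le) ha.le]
    have hgoal : a * Real.log (1+a) + (Real.log (1+a) + a/(1+a)) * (b - a)
        + (b-a)^2/(2*(1+a+b))
        = b*Real.log (1+a) + (a*(b-a)/(1+a) + (b-a)^2/(2*(1+a+b))) := by ring
    rw [hgoal]
    linarith [hkey, hfrac]
  · -- b ≤ a
    have hu : 0 ≤ (a-b)/(1+b) := div_nonneg (by linarith) h1b.le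
    have hlog := logB _ hu
    have heq : 1 + (a-b)/(1+b) = (1+a)/(1+b) := by field_simp; ring
    rw [heq, Real.log_div h1a.ne' h1b.ne'] at hlog
    have h2 : ((a-b)/(1+b))*(2 + (a-b)/(1+b)) / (2*((1+a)/(1+b)))
        = (a-b)*(2+a+b)/(2*(1+b)*(1+a)) := by
      rw [div_eq_div_iff (ne_of_gt (by positivity)) (ne_of_gt (by positivity))]
      field_simp
      ring
    rw [h2] at hlog
    -- hlog : log(1+a) - log(1+b) ≤ (a-b)(2+a+b)/(2(1+b)(1+a))
    have hkey := mul_le_mul_of_nonneg_left hlog hb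
    rw [mul_sub] at hkey
    have hfrac : a*(b-a)/(1+a) + (b-a)^2/(2*(1+a+b)) ≤ -(b * ((a-b)*(2+a+b)/(2*(1+b)*(1+a)))) := by
      have hR : -(b * ((a-b)*(2+a+b)/(2*(1+b)*(1+a)))) = (-(b*(a-b)*(2+a+b)))/(2*(1+b)*(1+a)) := by
        ring
      rw [hR, div_add_div _ _ h1a.ne' (ne_of_gt (by positivity)),
        div_le_div_iff₀ (by positivity) (by positivity)]
      nlinarith [mul_nonneg (mul_nonneg (sub_nonneg.2 hle) hb) (sq_nonneg b),
        mul_nonneg (mul_nonneg (sub_nonneg.2 hle) hb) hb,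
        mul_nonneg (mul_nonneg (sub_nonneg.2 hle) hb) ha.le,
        mul_nonneg (sub_nonneg.2 hle) hb,
        mul_nonneg (mul_nonneg (mul_nonneg (sub_nonneg.2 hle) hb) ha.le) hb]
    have hgoal : a * Real.log (1+a) + (Real.log (1+a) + a/(1+a)) * (b - a)
        + (b-a)^2/(2*(1+a+b))
        = b*Real.log (1+a) + (a*(b-a)/(1+a) + (b-a)^2/(2*(1+a+b))) := by ring
    rw [hgoal]
    linarith [hkey, hfrac]

/-- **Sharpened convexity of `p ↦ |p| ln(1+|p|)`** (Remark 3.3): for all `x ≠ 0` and `y` in `ℝⁿ`,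
`|y|ln(1+|y|) ≥ |x|ln(1+|x|) + (ln(1+|x|) + |x|/(1+|x|)) (x/|x|)·(y-x) + |y-x|²/(2(1+|x|+|y|))`. -/
theorem sharpened_convexity_log (n : ℕ) (hn : 1 ≤ n)
    (x y : EuclideanSpace ℝ (Fin n)) (hx : x ≠ 0) :
    ‖y‖ * Real.log (1 + ‖y‖) ≥ ‖x‖ * Real.log (1 + ‖x‖) +
      (Real.log (1 + ‖x‖) + ‖x‖ / (1 + ‖x‖)) * ⟪‖x‖⁻¹ • x, y - x⟫ +
      ‖y - x‖ ^ 2 / (2 * (1 + ‖x‖ + ‖y‖)) := by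
  set a := ‖x‖ with hA
  set b := ‖y‖ with hB
  have ha : 0 < a := norm_pos_iff.2 hx
  have hb : 0 ≤ b := norm_nonneg y
  set t := (⟪‖x‖⁻¹ • x, y - x⟫ : ℝ) with hT
  have hinx : ⟪‖x‖⁻¹ • x, x⟫ = a := by
    rw [real_inner_smul_left, real_inner_self_eq_norm_sq]
    field_simp
    ring
  have hiny : ⟪‖x‖⁻¹ • x, y⟫ ≤ b := by
    have := real_inner_le_norm (‖x‖⁻¹ • x) y
    have hn1 : ‖‖x‖⁻¹ • x‖ = 1 := by
      rw [norm_smul, norm_inv, norm_norm, inv_mul_cancel₀ ha.ne']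
    rw [hn1, one_mul] at this
    exact this
  have ht : t ≤ b - a := by
    have : t = ⟪‖x‖⁻¹ • x, y⟫ - ⟪‖x‖⁻¹ • x, x⟫ := by
      rw [hT, inner_sub_right]
    rw [this, hinx]
    linarith
  have hN : ‖y - x‖^2 = b^2 - a^2 - 2*a*t := by
    have h1 : t = (⟪x, y⟫ - a^2)/a := by
      rw [hT, inner_sub_right, real_inner_smul_left, real_inner_smul_left,
        real_inner_self_eq_norm_sq, real_inner_comm]
      field_simp
      rw [hA]
      ring
    have h2 : ⟪x, y⟫ = a*t + a^2 := by
      rw [h1]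
      field_simp
      ring
    rw [norm_sub_sq_real, real_inner_comm, h2]
    ring
  have hD : (0:ℝ) < 2*(1+a+b) := by linarith
  have h1d := oneD a b ha hb
  have hsplit : ‖y - x‖^2 / (2*(1+a+b))
      = (b-a)^2/(2*(1+a+b)) + 2*a*((b-a)-t)/(2*(1+a+b)) := by
    rw [hN]
    ring
  have hs : 0 ≤ (b-a) - t := by linarith
  have hlog := Real.log_nonneg (by linarith : (1:ℝ) ≤ 1 + a)
  have hKge : a/(1+a+b) ≤ Real.log (1+a) + a/(1+a) := by
    have h1 : a/(1+a+b) ≤ a/(1+a) := by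
      rw [div_le_div_iff₀ (by linarith) (by linarith)]
      nlinarith [mul_nonneg ha.le hb]
    linarith
  have h2 : 2*a*((b-a)-t)/(2*(1+a+b)) = (a/(1+a+b)) * ((b-a)-t) := by
    field_simp
  have h3 := mul_le_mul_of_nonneg_right hKge hs
  have hstep : (Real.log (1+a)+a/(1+a)) * t + 2*a*((b-a)-t)/(2*(1+a+b))
      ≤ (Real.log (1+a)+a/(1+a)) * (b-a) := by
    rw [h2]
    nlinarith [h3]
  linarith [h1d, hsplit, hstep]
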